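/- arXiv:1103.0491 — 2 statements merged into one kernel-verified Lean document; each statement's English description precedes it below -/
import Mathlib

section
/- For every u₁ > 0 and every k with 2 ≤ k ≤ n, the derivative with respect to u₁ of the function u₁ ↦ (U_k(u₁) − U_{k−1}(u₁))/(U_k(u₁) − U₁(u₁)) is nonnegative (here for k = 2 the quotient is identically 1). -/
open Finset

noncomputable def U (g1 : ℝ → ℝ) (h : ℝ) : ℕ → ℝ → ℝ
  | 0, u => u
  | 1, u => u
  | 2, u => u + h ^ 2 / 2 * g1 u
  | k + 3, u => 2 * U g1 h (k + 2) u - U g1 h (k + 1) u + h ^ 2 * g1 (U g1 h (k + 2) u)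

noncomputable def V (g1 : ℝ → ℝ) (h : ℝ) : ℕ → ℝ → ℝ
  | 0, _ => 1
  | 1, _ => 1
  | 2, u => 1 + h ^ 2 / 2 * deriv g1 u
  | k + 3, u => 2 * V g1 h (k + 2) u - V g1 h (k + 1) u
      + h ^ 2 * (deriv g1 (U g1 h (k + 2) u) * V g1 h (k + 2) u)

lemma hasDerivAt_U (g1 : ℝ → ℝ) (h : ℝ) (hd : Differentiable ℝ g1) :
    ∀ k u, HasDerivAt (U g1 h k) (V g1 h k u) u := by
  intro k
  induction k using Nat.strong_induction_on with
  | _ k ih =>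
  match k with
  | 0 =>
    intro u
    have hfun : U g1 h 0 = fun u => u := by funext u; simp [U]
    have hV : V g1 h 0 u = 1 := by simp [V]
    rw [hfun, hV]; exact hasDerivAt_id u
  | 1 =>
    intro u
    have hfun : U g1 h 1 = fun u => u := by funext u; simp [U]
    have hV : V g1 h 1 u = 1 := by simp [V]
    rw [hfun, hV]; exact hasDerivAt_id u
  | 2 =>
    intro u
    have hfun : U g1 h 2 = fun u => u + h ^ 2 / 2 * g1 u := by funext u; simp [U]
    have hV : V g1 h 2 u = 1 + h ^ 2 / 2 * deriv g1 u := by simp [V]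
    rw [hfun, hV]
    exact (hasDerivAt_id u).add (((hd u).hasDerivAt).const_mul (h ^ 2 / 2))
  | (k + 3) =>
    intro u
    have h2 := ih (k + 2) (by omega) u
    have h1 := ih (k + 1) (by omega) u
    have hcomp : HasDerivAt (fun u => g1 (U g1 h (k + 2) u))
        (deriv g1 (U g1 h (k + 2) u) * V g1 h (k + 2) u) u :=
      ((hd _).hasDerivAt).comp u h2
    have hfun : U g1 h (k + 3)
        = fun u => 2 * U g1 h (k + 2) u - U g1 h (k + 1) u + h ^ 2 * g1 (U g1 h (k + 2) u) := by
      funext u; simp [U]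
    have hV : V g1 h (k + 3) u = 2 * V g1 h (k + 2) u - V g1 h (k + 1) u
        + h ^ 2 * (deriv g1 (U g1 h (k + 2) u) * V g1 h (k + 2) u) := by simp [V]
    rw [hfun, hV]
    exact ((h2.const_mul 2).sub h1).add (hcomp.const_mul (h ^ 2))

lemma U_pos (g1 : ℝ → ℝ) (h : ℝ) (hgpos : ∀ x > 0, 0 < g1 x) (hh2 : 0 < h ^ 2)
    (u : ℝ) (hu : 0 < u) :
    ∀ k, 0 < U g1 h (k + 1) u ∧ U g1 h (k + 1) u < U g1 h (k + 2) u := by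
  intro k
  induction k with
  | zero =>
    constructor
    · simpa [U] using hu
    · have := hgpos u hu
      show U g1 h 1 u < U g1 h 2 u
      simp only [U]; nlinarith
  | succ k ih =>
    obtain ⟨h1, h2⟩ := ih
    have hg := hgpos _ (h1.trans h2)
    refine ⟨by linarith, ?_⟩
    show U g1 h (k + 2) u < U g1 h (k + 3) u
    have e : U g1 h (k + 3) u
        = 2 * U g1 h (k + 2) u - U g1 h (k + 1) u + h ^ 2 * g1 (U g1 h (k + 2) u) := by simp [U]
    rw [e]; nlinarith

lemma U_ge_one (g1 : ℝ → ℝ) (h : ℝ) (hgpos : ∀ x > 0, 0 < g1 x) (hh2 : 0 < h ^ 2)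
    (u : ℝ) (hu : 0 < u) :
    ∀ k, U g1 h 1 u ≤ U g1 h (k + 1) u := by
  intro k
  induction k with
  | zero => exact le_refl _
  | succ k ih => exact ih.trans (U_pos g1 h hgpos hh2 u hu k).2.le

lemma V_ge (g1 : ℝ → ℝ) (h : ℝ) (hgpos : ∀ x > 0, 0 < g1 x)
    (hg'pos : ∀ x > 0, 0 < deriv g1 x) (hh2 : 0 < h ^ 2) (u : ℝ) (hu : 0 < u) :
    ∀ k, 1 ≤ V g1 h (k + 1) u ∧ V g1 h (k + 1) u ≤ V g1 h (k + 2) u := by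
  intro k
  induction k with
  | zero =>
    constructor
    · simp [V]
    · show V g1 h 1 u ≤ V g1 h 2 u
      have := hg'pos u hu
      simp only [V]; nlinarith
  | succ k ih =>
    obtain ⟨h1, h2⟩ := ih
    have hUp := (U_pos g1 h hgpos hh2 u hu k).1.trans (U_pos g1 h hgpos hh2 u hu k).2
    have hg' := hg'pos _ hUp
    refine ⟨by linarith, ?_⟩
    show V g1 h (k + 2) u ≤ V g1 h (k + 3) u
    have e : V g1 h (k + 3) u = 2 * V g1 h (k + 2) u - V g1 h (k + 1) u
        + h ^ 2 * (deriv g1 (U g1 h (k + 2) u) * V g1 h (k + 2) u) := by simp [V]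
    have hB1 : (0:ℝ) ≤ V g1 h (k + 2) u := by linarith
    have := mul_nonneg hh2.le (mul_nonneg hg'.le hB1)
    rw [e]; linarith

/-- The key invariant: `g1'(U_{k+2}) V_{k+2} (U_{k+2} - U_{k+1}) ≥ g1(U_{k+2}) (V_{k+2} - V_{k+1})`. -/
lemma invP (g1 : ℝ → ℝ) (h : ℝ) (hgpos : ∀ x > 0, 0 < g1 x)
    (hg'pos : ∀ x > 0, 0 < deriv g1 x)
    (hg'mono : ∀ a b, 0 < a → a ≤ b → deriv g1 a ≤ deriv g1 b)
    (hconv : ∀ a b, 0 < a → a ≤ b → g1 b - g1 a ≤ deriv g1 b * (b - a))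
    (hh2 : 0 < h ^ 2) (u : ℝ) (hu : 0 < u) :
    ∀ k, g1 (U g1 h (k + 2) u) * (V g1 h (k + 2) u - V g1 h (k + 1) u)
      ≤ deriv g1 (U g1 h (k + 2) u) * V g1 h (k + 2) u * (U g1 h (k + 2) u - U g1 h (k + 1) u) := by
  intro k
  induction k with
  | zero =>
    show g1 (U g1 h 2 u) * (V g1 h 2 u - V g1 h 1 u)
      ≤ deriv g1 (U g1 h 2 u) * V g1 h 2 u * (U g1 h 2 u - U g1 h 1 u)
    simp only [U, V]
    have hgu := hgpos u hu
    have hg'u := hg'pos u hu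
    have hb : u ≤ u + h ^ 2 / 2 * g1 u := by nlinarith
    have hc := hconv u (u + h ^ 2 / 2 * g1 u) hu hb
    have hm := hg'mono u (u + h ^ 2 / 2 * g1 u) hu hb
    have t1 : (0:ℝ) ≤ h ^ 2 / 2 * deriv g1 u := by positivity
    have t2 : (0:ℝ) ≤ h ^ 2 / 2 * g1 u := by positivity
    have key1 := mul_le_mul_of_nonneg_right hc t1
    have key2 := mul_le_mul_of_nonneg_right hm t2
    nlinarith [key1, key2]
  | succ k ih =>
    have hU0 := U_pos g1 h hgpos hh2 u hu k
    have hU1 := U_pos g1 h hgpos hh2 u hu (k + 1)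
    have hV0 := V_ge g1 h hgpos hg'pos hh2 u hu k
    have hV1 := V_ge g1 h hgpos hg'pos hh2 u hu (k + 1)
    have hA1pos : 0 < U g1 h (k + 2) u := hU1.1
    have h12 : U g1 h (k + 2) u < U g1 h (k + 3) u := hU1.2
    have h01 : U g1 h (k + 1) u < U g1 h (k + 2) u := hU0.2
    have hB12 : V g1 h (k + 2) u ≤ V g1 h (k + 3) u := hV1.2
    have hB1 : 1 ≤ V g1 h (k + 2) u := hV1.1
    have hB01 : V g1 h (k + 1) u ≤ V g1 h (k + 2) u := hV0.2
    have eU : U g1 h (k + 3) u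
        = 2 * U g1 h (k + 2) u - U g1 h (k + 1) u + h ^ 2 * g1 (U g1 h (k + 2) u) := by simp [U]
    have eV : V g1 h (k + 3) u = 2 * V g1 h (k + 2) u - V g1 h (k + 1) u
        + h ^ 2 * (deriv g1 (U g1 h (k + 2) u) * V g1 h (k + 2) u) := by simp [V]
    have hgA1 := hgpos _ hA1pos
    have hg'A1 := hg'pos _ hA1pos
    have hconv2 := hconv (U g1 h (k + 2) u) (U g1 h (k + 3) u) hA1pos h12.le
    have hmono2 := hg'mono (U g1 h (k + 2) u) (U g1 h (k + 3) u) hA1pos h12.le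
    have hE1pos : 0 < U g1 h (k + 3) u - U g1 h (k + 2) u := sub_pos.2 h12
    have hE'1 : 0 ≤ V g1 h (k + 3) u - V g1 h (k + 2) u := sub_nonneg.2 hB12
    have step1 : g1 (U g1 h (k + 2) u) * (V g1 h (k + 3) u - V g1 h (k + 2) u)
        ≤ deriv g1 (U g1 h (k + 2) u) * V g1 h (k + 2) u
          * (U g1 h (k + 3) u - U g1 h (k + 2) u) := by
      rw [eU, eV]; nlinarith [ih]
    have step2 : deriv g1 (U g1 h (k + 2) u) * V g1 h (k + 2) u
          * (U g1 h (k + 3) u - U g1 h (k + 2) u)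
        ≤ deriv g1 (U g1 h (k + 3) u) * V g1 h (k + 2) u
          * (U g1 h (k + 3) u - U g1 h (k + 2) u) := by
      have hnn : 0 ≤ V g1 h (k + 2) u * (U g1 h (k + 3) u - U g1 h (k + 2) u) :=
        mul_nonneg (by linarith) hE1pos.le
      nlinarith [mul_le_mul_of_nonneg_right hmono2 hnn]
    show g1 (U g1 h (k + 3) u) * (V g1 h (k + 3) u - V g1 h (k + 2) u)
      ≤ deriv g1 (U g1 h (k + 3) u) * V g1 h (k + 3) u
        * (U g1 h (k + 3) u - U g1 h (k + 2) u)
    nlinarith [step1, step2, mul_le_mul_of_nonneg_right hconv2 hE'1]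

lemma Lmono (g1 : ℝ → ℝ) (h : ℝ) (hgpos : ∀ x > 0, 0 < g1 x)
    (hg'pos : ∀ x > 0, 0 < deriv g1 x)
    (hg'mono : ∀ a b, 0 < a → a ≤ b → deriv g1 a ≤ deriv g1 b)
    (hconv : ∀ a b, 0 < a → a ≤ b → g1 b - g1 a ≤ deriv g1 b * (b - a))
    (hh2 : 0 < h ^ 2) (u : ℝ) (hu : 0 < u) (k : ℕ) :
    (V g1 h (k + 2) u - V g1 h (k + 1) u) * (U g1 h (k + 3) u - U g1 h (k + 2) u)
      ≤ (V g1 h (k + 3) u - V g1 h (k + 2) u) * (U g1 h (k + 2) u - U g1 h (k + 1) u) := by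
  have hP := invP g1 h hgpos hg'pos hg'mono hconv hh2 u hu k
  have eU : U g1 h (k + 3) u
      = 2 * U g1 h (k + 2) u - U g1 h (k + 1) u + h ^ 2 * g1 (U g1 h (k + 2) u) := by simp [U]
  have eV : V g1 h (k + 3) u = 2 * V g1 h (k + 2) u - V g1 h (k + 1) u
      + h ^ 2 * (deriv g1 (U g1 h (k + 2) u) * V g1 h (k + 2) u) := by simp [V]
  rw [eU, eV]
  nlinarith [mul_le_mul_of_nonneg_left hP (le_of_lt hh2)]

lemma Tlem (g1 : ℝ → ℝ) (h : ℝ) (hgpos : ∀ x > 0, 0 < g1 x)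
    (hg'pos : ∀ x > 0, 0 < deriv g1 x)
    (hg'mono : ∀ a b, 0 < a → a ≤ b → deriv g1 a ≤ deriv g1 b)
    (hconv : ∀ a b, 0 < a → a ≤ b → g1 b - g1 a ≤ deriv g1 b * (b - a))
    (hh2 : 0 < h ^ 2) (u : ℝ) (hu : 0 < u) :
    ∀ k, (U g1 h (k + 2) u - U g1 h (k + 1) u) * (V g1 h (k + 2) u - V g1 h 1 u)
      ≤ (V g1 h (k + 2) u - V g1 h (k + 1) u) * (U g1 h (k + 2) u - U g1 h 1 u) := by
  intro k
  induction k with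
  | zero =>
    have e1 : U g1 h 1 u = u := by simp [U]
    have e1' : V g1 h 1 u = 1 := by simp [V]
    show (U g1 h 2 u - U g1 h 1 u) * (V g1 h 2 u - V g1 h 1 u)
      ≤ (V g1 h 2 u - V g1 h 1 u) * (U g1 h 2 u - U g1 h 1 u)
    exact le_of_eq (by ring)
  | succ k ih =>
    have hU0 := U_pos g1 h hgpos hh2 u hu k
    have hU1 := U_pos g1 h hgpos hh2 u hu (k + 1)
    have hW : U g1 h 1 u ≤ U g1 h (k + 2) u := U_ge_one g1 h hgpos hh2 u hu (k + 1)
    have hL := Lmono g1 h hgpos hg'pos hg'mono hconv hh2 u hu k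
    have hEpos : 0 < U g1 h (k + 2) u - U g1 h (k + 1) u := sub_pos.2 hU0.2
    have hE1pos : 0 < U g1 h (k + 3) u - U g1 h (k + 2) u := sub_pos.2 hU1.2
    have k1 := mul_le_mul_of_nonneg_right hL (sub_nonneg.2 hW)
    have k2 := mul_le_mul_of_nonneg_right ih hE1pos.le
    have h2 : (U g1 h (k + 3) u - U g1 h (k + 2) u) * (V g1 h (k + 2) u - V g1 h 1 u)
        ≤ (V g1 h (k + 3) u - V g1 h (k + 2) u) * (U g1 h (k + 2) u - U g1 h 1 u) := by
      have hmul : (U g1 h (k + 3) u - U g1 h (k + 2) u) * (V g1 h (k + 2) u - V g1 h 1 u)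
            * (U g1 h (k + 2) u - U g1 h (k + 1) u)
          ≤ (V g1 h (k + 3) u - V g1 h (k + 2) u) * (U g1 h (k + 2) u - U g1 h 1 u)
            * (U g1 h (k + 2) u - U g1 h (k + 1) u) := by nlinarith [k1, k2]
      exact le_of_mul_le_mul_right hmul hEpos
    show (U g1 h (k + 3) u - U g1 h (k + 2) u) * (V g1 h (k + 3) u - V g1 h 1 u)
      ≤ (V g1 h (k + 3) u - V g1 h (k + 2) u) * (U g1 h (k + 3) u - U g1 h 1 u)
    nlinarith [h2]

theorem stmt7
    (g1 g2 : ℝ → ℝ)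
    (hg1C : ContDiff ℝ 3 g1) (hg2C : ContDiff ℝ 3 g2)
    (hg1A : AnalyticAt ℝ g1 0) (hg2A : AnalyticAt ℝ g2 0)
    (hg10 : g1 0 = 0) (hg20 : g2 0 = 0)
    (hg1d1 : ∀ x > 0, 0 < deriv g1 x) (hg2d1 : ∀ x > 0, 0 < deriv g2 x)
    (hg1d2 : ∀ x > 0, 0 < iteratedDeriv 2 g1 x) (hg2d2 : ∀ x > 0, 0 < iteratedDeriv 2 g2 x)
    (hg1d3 : ∀ x > 0, 0 ≤ iteratedDeriv 3 g1 x) (hg2d3 : ∀ x > 0, 0 ≤ iteratedDeriv 3 g2 x)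
    (n : ℕ) (hn : 2 ≤ n) (h : ℝ) (hh : h = 1 / ((n : ℝ) - 1))
    (u1 : ℝ) (hu1 : 0 < u1) (k : ℕ) (hk2 : 2 ≤ k) (hkn : k ≤ n) :
    0 ≤ deriv (fun x => (U g1 h k x - U g1 h (k - 1) x) / (U g1 h k x - U g1 h 1 x)) u1 := by
  obtain ⟨j, rfl⟩ : ∃ j, k = j + 2 := ⟨k - 2, by omega⟩
  have hd : Differentiable ℝ g1 := hg1C.differentiable (by norm_num)
  have hdc : ContDiff ℝ 2 (deriv g1) := by
    have h3 : ContDiff ℝ ((2 : ℕ) + 1) g1 := by exact_mod_cast hg1C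
    exact (contDiff_succ_iff_deriv.mp h3).2.2
  have hcont : Continuous g1 := hg1C.continuous
  have hcont' : Continuous (deriv g1) := hdc.continuous
  have hg1sm : StrictMonoOn g1 (Set.Ici 0) := by
    apply strictMonoOn_of_deriv_pos (convex_Ici 0) hcont.continuousOn
    intro x hx
    rw [interior_Ici] at hx
    exact hg1d1 x hx
  have hgpos : ∀ x > 0, 0 < g1 x := by
    intro x hx
    have := hg1sm (Set.mem_Ici.2 le_rfl) (Set.mem_Ici.2 hx.le) hx
    rwa [hg10] at this
  have hg'sm : StrictMonoOn (deriv g1) (Set.Ici 0) := by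
    apply strictMonoOn_of_deriv_pos (convex_Ici 0) hcont'.continuousOn
    intro x hx
    rw [interior_Ici] at hx
    have := hg1d2 x hx
    rwa [iteratedDeriv_succ, iteratedDeriv_one] at this
  have hg'mono : ∀ a b, 0 < a → a ≤ b → deriv g1 a ≤ deriv g1 b := by
    intro a b ha hab
    exact hg'sm.monotoneOn (Set.mem_Ici.2 ha.le) (Set.mem_Ici.2 (ha.trans_le hab).le) hab
  have hconv : ∀ a b, 0 < a → a ≤ b → g1 b - g1 a ≤ deriv g1 b * (b - a) := by
    intro a b ha hab
    rcases eq_or_lt_of_le hab with rfl | hlt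
    · simp
    · obtain ⟨c, hc, hc'⟩ := exists_deriv_eq_slope g1 hlt hcont.continuousOn (fun x _ => (hd x).differentiableWithinAt)
      have hcb : deriv g1 c ≤ deriv g1 b := hg'mono c b (ha.trans hc.1) hc.2.le
      have hba : 0 < b - a := sub_pos.2 hlt
      have : g1 b - g1 a = deriv g1 c * (b - a) := by
        rw [hc']; field_simp
      rw [this]
      exact mul_le_mul_of_nonneg_right hcb hba.le
  have hh2 : 0 < h ^ 2 := by
    have h2n : (2 : ℝ) ≤ (n : ℝ) := by exact_mod_cast hn
    have : (0 : ℝ) < (n : ℝ) - 1 := by linarith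
    rw [hh]; positivity
  have hUd := hasDerivAt_U g1 h hd
  have hnum : HasDerivAt (fun x => U g1 h (j + 2) x - U g1 h (j + 1) x)
      (V g1 h (j + 2) u1 - V g1 h (j + 1) u1) u1 := (hUd _ u1).sub (hUd _ u1)
  have hden : HasDerivAt (fun x => U g1 h (j + 2) x - U g1 h 1 x)
      (V g1 h (j + 2) u1 - V g1 h 1 u1) u1 := (hUd _ u1).sub (hUd _ u1)
  have hWpos : 0 < U g1 h (j + 2) u1 - U g1 h 1 u1 := by
    have h1 := U_ge_one g1 h hgpos hh2 u1 hu1 j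
    have h2 := (U_pos g1 h hgpos hh2 u1 hu1 j).2
    linarith
  have hdiv := hnum.div hden (ne_of_gt hWpos)
  have hT := Tlem g1 h hgpos hg1d1 hg'mono hconv hh2 u1 hu1 j
  show 0 ≤ deriv (fun x => (U g1 h (j + 2) x - U g1 h (j + 1) x)
      / (U g1 h (j + 2) x - U g1 h 1 x)) u1
  rw [show (fun x => (U g1 h (j + 2) x - U g1 h (j + 1) x) / (U g1 h (j + 2) x - U g1 h 1 x)) = ((fun x => U g1 h (j + 2) x - U g1 h (j + 1) x) / fun x => U g1 h (j + 2) x - U g1 h 1 x) from rfl, hdiv.deriv]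
  apply div_nonneg
  · linarith [hT]
  · positivity
end

section
/- Fix α > 0 and an integer n ≥ 2. If the function g := g₁/g₂ is surjective from (0, ∞) onto (0, ∞) and strictly decreasing on (0, ∞), then the discrete system (S) with parameter α has exactly one positive solution (u₁, …, u_n) ∈ (0, ∞)ⁿ. -/
set_option maxHeartbeats 1000000

open Finset

/-- `(α, u 1, …, u n)` is a positive solution of the discrete system (S). -/
def IsSolution (g1 g2 : ℝ → ℝ) (n : ℕ) (h α : ℝ) (u : ℕ → ℝ) : Prop :=
  (∀ k, 1 ≤ k → k ≤ n → 0 < u k) ∧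
  u 2 - u 1 = h ^ 2 / 2 * g1 (u 1) ∧
  (∀ k, 2 ≤ k → k ≤ n - 1 → u (k + 1) - 2 * u k + u (k - 1) = h ^ 2 * g1 (u k)) ∧
  u n - u (n - 1) + h ^ 2 / 2 * g1 (u n) = h * α * g2 (u n)

section aux

variable (g1 : ℝ → ℝ) (h : ℝ)

lemma U_zero (x : ℝ) : U g1 h 0 x = x := rfl
lemma U_one (x : ℝ) : U g1 h 1 x = x := rfl
lemma U_two (x : ℝ) : U g1 h 2 x = x + h ^ 2 / 2 * g1 x := rfl
lemma U_rec (j : ℕ) (x : ℝ) :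
    U g1 h (j + 3) x = 2 * U g1 h (j + 2) x - U g1 h (j + 1) x
      + h ^ 2 * g1 (U g1 h (j + 2) x) := rfl

lemma V_zero (x : ℝ) : V g1 h 0 x = 1 := rfl
lemma V_one (x : ℝ) : V g1 h 1 x = 1 := rfl
lemma V_two (x : ℝ) : V g1 h 2 x = 1 + h ^ 2 / 2 * deriv g1 x := rfl
lemma V_rec (j : ℕ) (x : ℝ) :
    V g1 h (j + 3) x = 2 * V g1 h (j + 2) x - V g1 h (j + 1) x
      + h ^ 2 * (deriv g1 (U g1 h (j + 2) x) * V g1 h (j + 2) x) := rfl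

lemma hasDerivAt_U_s11 (hg1d : Differentiable ℝ g1) :
    ∀ (m : ℕ) (a : ℝ), HasDerivAt (fun x => U g1 h m x) (V g1 h m a) a := by
  intro m
  induction m using Nat.strong_induction_on with
  | _ m ih =>
    intro a
    rcases lt_or_ge m 3 with hm3 | hm3
    · interval_cases m
      · simpa [U_zero, V_zero] using hasDerivAt_id' a
      · simpa [U_one, V_one] using hasDerivAt_id' a
      · simp only [U_two, V_two]
        exact (hasDerivAt_id a).add (((hg1d a).hasDerivAt).const_mul (h ^ 2 / 2))
    · obtain ⟨j, rfl⟩ : ∃ j, m = j + 3 := ⟨m - 3, by omega⟩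
      have d2 := ih (j + 2) (by omega) a
      have d1 := ih (j + 1) (by omega) a
      have dcomp : HasDerivAt (fun x => g1 (U g1 h (j + 2) x))
          (deriv g1 (U g1 h (j + 2) a) * V g1 h (j + 2) a) a :=
        HasDerivAt.comp a ((hg1d _).hasDerivAt) d2
      simp only [U_rec, V_rec]
      exact ((d2.const_mul 2).sub d1).add (dcomp.const_mul (h ^ 2))

lemma U_at_zero (hg10 : g1 0 = 0) : ∀ m : ℕ, U g1 h m 0 = 0 := by
  intro m
  induction m using Nat.strong_induction_on with
  | _ m ih =>
    rcases lt_or_ge m 3 with hm3 | hm3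
    · interval_cases m
      · simp [U_zero]
      · simp [U_one]
      · simp [U_two, hg10]
    · obtain ⟨j, rfl⟩ : ∃ j, m = j + 3 := ⟨m - 3, by omega⟩
      rw [U_rec, ih (j + 2) (by omega), ih (j + 1) (by omega), hg10]
      ring

end aux

private lemma key_alg {A dA B dB P Q v c : ℝ} (hA : 0 < A) (hdA : 0 < dA)
    (hB : 0 < B) (hdB : 0 < dB) (hv : 0 < v) (hP : 0 < P) (hQ : 0 < Q) (hc : 0 ≤ c)
    (hptw : dA * B ≤ A * dB) (hX : A * Q < dA * v * P) :
    (Q + c * (dA * v)) * B < (P + c * A) * (dB * v) := by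
  have step1 : Q * B < P * (dB * v) := by
    have c1 : dA * (Q * B) ≤ Q * (A * dB) := by nlinarith [mul_le_mul_of_nonneg_left hptw hQ.le]
    have c2 : Q * (A * dB) < dA * (P * (dB * v)) := by
      nlinarith [mul_lt_mul_of_pos_right hX hdB]
    exact lt_of_mul_lt_mul_left (lt_of_le_of_lt c1 c2) hdA.le
  have step2 : c * (dA * v) * B ≤ c * A * (dB * v) := by
    nlinarith [mul_le_mul_of_nonneg_left hptw (mul_nonneg hc hv.le)]
  nlinarith [step1, step2]

theorem stmt11
    (g1 g2 : ℝ → ℝ)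
    (hg1C : ContDiff ℝ 3 g1) (hg2C : ContDiff ℝ 3 g2)
    (hg1A : AnalyticAt ℝ g1 0) (hg2A : AnalyticAt ℝ g2 0)
    (hg10 : g1 0 = 0) (hg20 : g2 0 = 0)
    (hg1d1 : ∀ x > 0, 0 < deriv g1 x) (hg2d1 : ∀ x > 0, 0 < deriv g2 x)
    (hg1d2 : ∀ x > 0, 0 < iteratedDeriv 2 g1 x) (hg2d2 : ∀ x > 0, 0 < iteratedDeriv 2 g2 x)
    (hg1d3 : ∀ x > 0, 0 ≤ iteratedDeriv 3 g1 x) (hg2d3 : ∀ x > 0, 0 ≤ iteratedDeriv 3 g2 x)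
    (n : ℕ) (hn : 2 ≤ n) (h : ℝ) (hh : h = 1 / ((n : ℝ) - 1))
    (α : ℝ) (hα : 0 < α)
    (hsurj : ∀ y > (0 : ℝ), ∃ x > (0 : ℝ), g1 x / g2 x = y)
    (hdec : StrictAntiOn (fun x => g1 x / g2 x) (Set.Ioi 0)) :
    (∃ u : ℕ → ℝ, IsSolution g1 g2 n h α u) ∧
    ∀ u v : ℕ → ℝ, IsSolution g1 g2 n h α u → IsSolution g1 g2 n h α v →
      ∀ k, 1 ≤ k → k ≤ n → u k = v k := by
  classical
  obtain ⟨m₀, rfl⟩ : ∃ m, n = m + 1 := ⟨n - 1, by omega⟩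
  have hm₀ : 1 ≤ m₀ := by omega
  have hm₀R : (0 : ℝ) < (m₀ : ℝ) := by exact_mod_cast hm₀
  have hcast : ((m₀ + 1 : ℕ) : ℝ) - 1 = (m₀ : ℝ) := by push_cast; ring
  have hh' : h = 1 / (m₀ : ℝ) := by rw [hh, hcast]
  have hpos : 0 < h := by rw [hh']; positivity
  have hmh : (m₀ : ℝ) * h = 1 := by rw [hh']; field_simp
  -- smoothness facts
  have hg1d : Differentiable ℝ g1 := hg1C.differentiable (by norm_num)
  have hg2d : Differentiable ℝ g2 := hg2C.differentiable (by norm_num)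
  have hg1c : Continuous g1 := hg1C.continuous
  have hdg1c2 : ContDiff ℝ 2 (deriv g1) := by
    have h3 : ContDiff ℝ ((2 : WithTop ℕ∞) + 1) g1 := by
      have : ((2 : WithTop ℕ∞) + 1) = 3 := by norm_num
      rw [this]; exact hg1C
    exact (contDiff_succ_iff_deriv.mp h3).2.2
  have hdg1cont : Continuous (deriv g1) := hdg1c2.continuous
  -- positivity of g1, g2 on (0, ∞)
  have hg1mono : StrictMonoOn g1 (Set.Ici 0) := by
    apply strictMonoOn_of_deriv_pos (convex_Ici 0) hg1c.continuousOn
    intro x hx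
    rw [interior_Ici] at hx
    exact hg1d1 x hx
  have hg2mono : StrictMonoOn g2 (Set.Ici 0) := by
    apply strictMonoOn_of_deriv_pos (convex_Ici 0) hg2C.continuous.continuousOn
    intro x hx
    rw [interior_Ici] at hx
    exact hg2d1 x hx
  have hg1pos : ∀ x, 0 < x → 0 < g1 x := by
    intro x hx
    have := hg1mono (Set.self_mem_Ici) (le_of_lt hx) hx
    rwa [hg10] at this
  have hg2pos : ∀ x, 0 < x → 0 < g2 x := by
    intro x hx
    have := hg2mono (Set.self_mem_Ici) (le_of_lt hx) hx
    rwa [hg20] at this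
  -- strict monotonicity of deriv g1 on [0,∞)
  have hdg1mono : StrictMonoOn (deriv g1) (Set.Ici 0) := by
    apply strictMonoOn_of_deriv_pos (convex_Ici 0) hdg1cont.continuousOn
    intro x hx
    rw [interior_Ici] at hx
    have := hg1d2 x hx
    rwa [show (2 : ℕ) = 1 + 1 from rfl, iteratedDeriv_succ, iteratedDeriv_one] at this
  -- mean value consequence (strict convexity of g1)
  have hmvt : ∀ x y : ℝ, 0 < x → x < y → g1 y - g1 x < deriv g1 y * (y - x) := by
    intro x y hx hxy
    obtain ⟨c, hc, hslope⟩ :=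
      exists_deriv_eq_slope g1 hxy hg1c.continuousOn hg1d.differentiableOn
    have hcy : deriv g1 c < deriv g1 y :=
      hdg1mono (le_of_lt (hx.trans hc.1)) (le_of_lt (hx.trans (hxy.trans_le le_rfl))) hc.2
    have hyx : 0 < y - x := by linarith
    calc g1 y - g1 x = (g1 y - g1 x) / (y - x) * (y - x) := by field_simp
    _ < deriv g1 y * (y - x) := by
        apply mul_lt_mul_of_pos_right _ hyx
        rw [← hslope]; exact hcy
  -- pointwise inequality from g = g1/g2 decreasing
  have hptwise : ∀ x : ℝ, 0 < x → deriv g1 x * g2 x ≤ g1 x * deriv g2 x := by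
    intro x hx
    have hg2x : g2 x ≠ 0 := (hg2pos x hx).ne'
    have hdiv : HasDerivAt (fun t => g1 t / g2 t)
        ((deriv g1 x * g2 x - g1 x * deriv g2 x) / (g2 x) ^ 2) x :=
      ((hg1d x).hasDerivAt).div ((hg2d x).hasDerivAt) hg2x
    have hW : HasDerivWithinAt (fun t => g1 t / g2 t)
        ((deriv g1 x * g2 x - g1 x * deriv g2 x) / (g2 x) ^ 2) (Set.Ioi x) x :=
      hdiv.hasDerivWithinAt
    rw [hasDerivWithinAt_iff_tendsto_slope' (by simp : x ∉ Set.Ioi x)] at hW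
    have hev : ∀ᶠ y in nhdsWithin x (Set.Ioi x),
        slope (fun t => g1 t / g2 t) x y ≤ 0 := by
      filter_upwards [self_mem_nhdsWithin] with y hy
      have hxy : x < y := hy
      have hlt : g1 y / g2 y < g1 x / g2 x := hdec hx (hx.trans hxy) hxy
      rw [slope_def_field]
      apply div_nonpos_of_nonpos_of_nonneg
      · simp only [sub_nonpos]
        exact hlt.le
      · linarith
    have hle : (deriv g1 x * g2 x - g1 x * deriv g2 x) / (g2 x) ^ 2 ≤ 0 :=
      le_of_tendsto hW hev
    have hsq : 0 < (g2 x) ^ 2 := by positivity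
    nlinarith [(div_le_iff₀ hsq).mp hle]
  -- growth of the shooting sequence
  have hUgrow : ∀ a : ℝ, 0 < a → ∀ m : ℕ, 1 ≤ m →
      a ≤ U g1 h m a ∧ U g1 h m a < U g1 h (m + 1) a := by
    intro a ha m hm
    induction m, hm using Nat.le_induction with
    | base =>
      rw [U_one, U_two]
      refine ⟨le_rfl, ?_⟩
      have := hg1pos a ha
      nlinarith [pow_pos hpos 2]
    | succ m hm ih =>
      obtain ⟨j, rfl⟩ : ∃ j, m = j + 1 := ⟨m - 1, by omega⟩
      refine ⟨le_trans ih.1 ih.2.le, ?_⟩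
      have hUpos : 0 < U g1 h (j + 2) a := lt_of_lt_of_le ha (le_trans ih.1 ih.2.le)
      have hg1U := hg1pos _ hUpos
      have h2 : 0 < h ^ 2 := pow_pos hpos 2
      have hprod : 0 < h ^ 2 * g1 (U g1 h (j + 2) a) := by positivity
      rw [show j + 1 + 1 + 1 = j + 3 from rfl, U_rec]
      have h22 : U g1 h (j + 1 + 1) a = U g1 h (j + 2) a := rfl
      have := ih.2
      rw [h22] at this ⊢
      linarith
  have hUpos : ∀ a : ℝ, 0 < a → ∀ m : ℕ, 1 ≤ m → 0 < U g1 h m a := by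
    intro a ha m hm
    exact lt_of_lt_of_le ha (hUgrow a ha m hm).1
  -- growth of V
  have hVgrow : ∀ a : ℝ, 0 < a → ∀ m : ℕ, 1 ≤ m →
      1 ≤ V g1 h m a ∧ V g1 h m a < V g1 h (m + 1) a := by
    intro a ha m hm
    induction m, hm using Nat.le_induction with
    | base =>
      rw [V_one, V_two]
      refine ⟨le_rfl, ?_⟩
      have := hg1d1 a ha
      nlinarith [pow_pos hpos 2]
    | succ m hm ih =>
      obtain ⟨j, rfl⟩ : ∃ j, m = j + 1 := ⟨m - 1, by omega⟩
      refine ⟨le_trans ih.1 ih.2.le, ?_⟩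
      have hUp : 0 < U g1 h (j + 2) a := hUpos a ha (j + 2) (by omega)
      have hdg1U := hg1d1 _ hUp
      have hVp : 0 < V g1 h (j + 2) a := lt_of_lt_of_le one_pos (le_trans ih.1 ih.2.le)
      have h2 : 0 < h ^ 2 := pow_pos hpos 2
      have hprod : 0 < h ^ 2 * (deriv g1 (U g1 h (j + 2) a) * V g1 h (j + 2) a) := by
        positivity
      rw [show j + 1 + 1 + 1 = j + 3 from rfl, V_rec]
      have h22 : V g1 h (j + 1 + 1) a = V g1 h (j + 2) a := rfl
      have := ih.2
      rw [h22] at this ⊢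
      linarith
  have hVpos : ∀ a : ℝ, 0 < a → ∀ m : ℕ, 1 ≤ m → 0 < V g1 h m a := by
    intro a ha m hm
    exact lt_of_lt_of_le one_pos (hVgrow a ha m hm).1
  -- the step inequality
  have hstep : ∀ a : ℝ, 0 < a → ∀ m : ℕ, 1 ≤ m →
      0 < (U g1 h (m + 1) a - U g1 h m a) *
            (deriv g1 (U g1 h (m + 1) a) * V g1 h (m + 1) a
              - deriv g1 (U g1 h m a) * V g1 h m a)
          - (V g1 h (m + 1) a - V g1 h m a) * (g1 (U g1 h (m + 1) a) - g1 (U g1 h m a)) := by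
    intro a ha m hm
    set x := U g1 h m a with hxdef
    set y := U g1 h (m + 1) a with hydef
    have hx : 0 < x := hUpos a ha m hm
    have hxy : x < y := (hUgrow a ha m hm).2
    have hQ : 0 < V g1 h (m + 1) a - V g1 h m a := by
      have := (hVgrow a ha m hm).2; linarith
    have hP : 0 < y - x := by linarith
    have hVm : 0 < V g1 h m a := hVpos a ha m hm
    have h1 : g1 y - g1 x < deriv g1 y * (y - x) := hmvt x y hx hxy
    have h2 : deriv g1 x ≤ deriv g1 y :=
      le_of_lt (hdg1mono (le_of_lt hx) (le_of_lt (hx.trans hxy)) hxy)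
    have h3 : deriv g1 y * V g1 h (m + 1) a - deriv g1 x * V g1 h m a
        ≥ deriv g1 y * (V g1 h (m + 1) a - V g1 h m a) := by
      have : deriv g1 x * V g1 h m a ≤ deriv g1 y * V g1 h m a :=
        mul_le_mul_of_nonneg_right h2 hVm.le
      nlinarith
    nlinarith [mul_lt_mul_of_pos_left h1 hQ, mul_le_mul_of_nonneg_left h3 hP.le]
  -- M_m ≥ 0
  have hMge : ∀ a : ℝ, 0 < a → ∀ m : ℕ, 1 ≤ m →
      0 ≤ deriv g1 (U g1 h m a) * V g1 h m a * (U g1 h (m + 1) a - U g1 h m a)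
          - g1 (U g1 h m a) * (V g1 h (m + 1) a - V g1 h m a) := by
    intro a ha m hm
    induction m, hm using Nat.le_induction with
    | base =>
      rw [U_one, U_two, V_one, V_two]
      have : deriv g1 a * 1 * (a + h ^ 2 / 2 * g1 a - a)
          - g1 a * (1 + h ^ 2 / 2 * deriv g1 a - 1) = 0 := by ring
      linarith
    | succ m hm ih =>
      obtain ⟨j, rfl⟩ : ∃ j, m = j + 1 := ⟨m - 1, by omega⟩
      have hst := hstep a ha (j + 1) (by omega)
      have hid : deriv g1 (U g1 h (j + 2) a) * V g1 h (j + 2) a *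
            (U g1 h (j + 3) a - U g1 h (j + 2) a)
          - g1 (U g1 h (j + 2) a) * (V g1 h (j + 3) a - V g1 h (j + 2) a)
        = (deriv g1 (U g1 h (j + 1) a) * V g1 h (j + 1) a *
              (U g1 h (j + 2) a - U g1 h (j + 1) a)
            - g1 (U g1 h (j + 1) a) * (V g1 h (j + 2) a - V g1 h (j + 1) a))
          + ((U g1 h (j + 2) a - U g1 h (j + 1) a) *
              (deriv g1 (U g1 h (j + 2) a) * V g1 h (j + 2) a
                - deriv g1 (U g1 h (j + 1) a) * V g1 h (j + 1) a)
            - (V g1 h (j + 2) a - V g1 h (j + 1) a) *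
              (g1 (U g1 h (j + 2) a) - g1 (U g1 h (j + 1) a))) := by
        rw [U_rec, V_rec]; ring
      rw [show j + 1 + 1 = j + 2 from rfl] at ih ⊢
      rw [show j + 2 + 1 = j + 3 from rfl]
      linarith [hid, hst, ih]
  -- X_m > 0
  have hX : ∀ a : ℝ, 0 < a → ∀ m : ℕ, 1 ≤ m →
      g1 (U g1 h (m + 1) a) * (V g1 h (m + 1) a - V g1 h m a)
        < deriv g1 (U g1 h (m + 1) a) * V g1 h (m + 1) a *
            (U g1 h (m + 1) a - U g1 h m a) := by
    intro a ha m hm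
    have hM := hMge a ha m hm
    have hst := hstep a ha m hm
    nlinarith
  -- the key inequality
  have hKEY : ∀ a : ℝ, 0 < a → ∀ m : ℕ, 1 ≤ m →
      ((V g1 h (m + 1) a - V g1 h m a)
          + h ^ 2 / 2 * (deriv g1 (U g1 h (m + 1) a) * V g1 h (m + 1) a))
        * g2 (U g1 h (m + 1) a)
      < ((U g1 h (m + 1) a - U g1 h m a) + h ^ 2 / 2 * g1 (U g1 h (m + 1) a))
        * (deriv g2 (U g1 h (m + 1) a) * V g1 h (m + 1) a) := by
    intro a ha m hm
    have hu : 0 < U g1 h (m + 1) a := hUpos a ha (m + 1) (by omega)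
    have hv : 0 < V g1 h (m + 1) a := hVpos a ha (m + 1) (by omega)
    have hQ0 : 0 < V g1 h (m + 1) a - V g1 h m a := by
      have := (hVgrow a ha m hm).2; linarith
    have hP0 : 0 < U g1 h (m + 1) a - U g1 h m a := by
      have := (hUgrow a ha m hm).2; linarith
    exact key_alg (hg1pos _ hu) (hg1d1 _ hu) (hg2pos _ hu) (hg2d1 _ hu) hv hP0 hQ0
      (by positivity) (hptwise _ hu) (hX a ha m hm)
  -- the shooting function
  set Φ : ℝ → ℝ := fun x =>
    (U g1 h (m₀ + 1) x - U g1 h m₀ x + h ^ 2 / 2 * g1 (U g1 h (m₀ + 1) x))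
      / (h * g2 (U g1 h (m₀ + 1) x)) with hΦdef
  have hDenpos : ∀ a : ℝ, 0 < a → 0 < h * g2 (U g1 h (m₀ + 1) a) := by
    intro a ha
    exact mul_pos hpos (hg2pos _ (hUpos a ha (m₀ + 1) (by omega)))
  have hNum : ∀ a : ℝ, HasDerivAt
      (fun x => U g1 h (m₀ + 1) x - U g1 h m₀ x + h ^ 2 / 2 * g1 (U g1 h (m₀ + 1) x))
      (V g1 h (m₀ + 1) a - V g1 h m₀ a
        + h ^ 2 / 2 * (deriv g1 (U g1 h (m₀ + 1) a) * V g1 h (m₀ + 1) a)) a := by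
    intro a
    have d2 := hasDerivAt_U_s11 g1 h hg1d (m₀ + 1) a
    have d1 := hasDerivAt_U_s11 g1 h hg1d m₀ a
    have dcomp : HasDerivAt (fun x => g1 (U g1 h (m₀ + 1) x))
        (deriv g1 (U g1 h (m₀ + 1) a) * V g1 h (m₀ + 1) a) a :=
      HasDerivAt.comp a ((hg1d _).hasDerivAt) d2
    exact (d2.sub d1).add (dcomp.const_mul (h ^ 2 / 2))
  have hDen : ∀ a : ℝ, HasDerivAt (fun x => h * g2 (U g1 h (m₀ + 1) x))
      (h * (deriv g2 (U g1 h (m₀ + 1) a) * V g1 h (m₀ + 1) a)) a := by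
    intro a
    have d2 := hasDerivAt_U_s11 g1 h hg1d (m₀ + 1) a
    have dcomp : HasDerivAt (fun x => g2 (U g1 h (m₀ + 1) x))
        (deriv g2 (U g1 h (m₀ + 1) a) * V g1 h (m₀ + 1) a) a :=
      HasDerivAt.comp a ((hg2d _).hasDerivAt) d2
    exact dcomp.const_mul h
  have hΦhd : ∀ a : ℝ, 0 < a → DifferentiableAt ℝ Φ a ∧ deriv Φ a < 0 := by
    intro a ha
    have hD0 : h * g2 (U g1 h (m₀ + 1) a) ≠ 0 := (hDenpos a ha).ne'
    have hdiv := (hNum a).div (hDen a) hD0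
    constructor
    · exact hdiv.differentiableAt
    · rw [show deriv Φ a = _ from hdiv.deriv]
      apply div_neg_of_neg_of_pos
      · have k := hKEY a ha m₀ hm₀
        set u := U g1 h (m₀ + 1) a
        set v := V g1 h (m₀ + 1) a
        have e1 : (V g1 h (m₀ + 1) a - V g1 h m₀ a + h ^ 2 / 2 * (deriv g1 u * v))
              * (h * g2 u)
            = h * (((V g1 h (m₀ + 1) a - V g1 h m₀ a)
                + h ^ 2 / 2 * (deriv g1 u * v)) * g2 u) := by ring
        have e2 : (U g1 h (m₀ + 1) a - U g1 h m₀ a + h ^ 2 / 2 * g1 u)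
              * (h * (deriv g2 u * v))
            = h * (((U g1 h (m₀ + 1) a - U g1 h m₀ a) + h ^ 2 / 2 * g1 u)
                * (deriv g2 u * v)) := by ring
        have hmul := mul_lt_mul_of_pos_left k hpos
        rw [← e1, ← e2] at hmul
        linarith
      · positivity
  have hΦanti : StrictAntiOn Φ (Set.Ioi 0) := by
    apply strictAntiOn_of_deriv_neg (convex_Ioi 0)
    · intro x hx
      exact (hΦhd x hx).1.continuousAt.continuousWithinAt
    · intro x hx
      rw [interior_Ioi] at hx
      exact (hΦhd x hx).2
  -- upper bound for the numerator
  have hbnd : ∀ a : ℝ, 0 < a → ∀ m : ℕ, 1 ≤ m →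
      U g1 h (m + 1) a - U g1 h m a + h ^ 2 / 2 * g1 (U g1 h (m + 1) a)
        ≤ (m : ℝ) * h ^ 2 * g1 (U g1 h (m + 1) a) := by
    intro a ha m hm
    induction m, hm using Nat.le_induction with
    | base =>
      have h1 : g1 a ≤ g1 (U g1 h 2 a) := by
        apply (hg1mono.monotoneOn) (le_of_lt ha)
        · exact le_of_lt (hUpos a ha 2 (by omega))
        · have := (hUgrow a ha 1 le_rfl).2
          rw [U_one] at this; exact this.le
      have e11 : U g1 h (1 + 1) a = U g1 h 2 a := rfl
      rw [e11, U_one, U_two]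
      have h2 : 0 ≤ h ^ 2 := (pow_pos hpos 2).le
      rw [U_two] at h1
      push_cast
      nlinarith
    | succ m hm ih =>
      obtain ⟨j, rfl⟩ : ∃ j, m = j + 1 := ⟨m - 1, by omega⟩
      have hrec : U g1 h (j + 3) a - U g1 h (j + 2) a
          = (U g1 h (j + 2) a - U g1 h (j + 1) a) + h ^ 2 * g1 (U g1 h (j + 2) a) := by
        rw [U_rec]; ring
      have hg1le : g1 (U g1 h (j + 2) a) ≤ g1 (U g1 h (j + 3) a) := by
        apply (hg1mono.monotoneOn)
        · exact le_of_lt (hUpos a ha (j + 2) (by omega))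
        · exact le_of_lt (hUpos a ha (j + 3) (by omega))
        · exact (hUgrow a ha (j + 2) (by omega)).2.le
      have hg1p : 0 < g1 (U g1 h (j + 2) a) := hg1pos _ (hUpos a ha (j + 2) (by omega))
      have h2 : 0 ≤ h ^ 2 := (pow_pos hpos 2).le
      rw [show j + 1 + 1 = j + 2 from rfl] at ih ⊢
      rw [show j + 2 + 1 = j + 3 from rfl]
      push_cast
      push_cast at ih
      have hmul : ((j : ℝ) + 3/2) * h ^ 2 * g1 (U g1 h (j + 2) a)
          ≤ ((j : ℝ) + 3/2) * h ^ 2 * g1 (U g1 h (j + 3) a) := by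
        apply mul_le_mul_of_nonneg_left hg1le
        positivity
      linarith
  -- bounds for Φ
  have hΦub : ∀ a : ℝ, 0 < a →
      Φ a ≤ g1 (U g1 h (m₀ + 1) a) / g2 (U g1 h (m₀ + 1) a) := by
    intro a ha
    have hb := hbnd a ha m₀ hm₀
    have hD := hDenpos a ha
    have hmh2 : (m₀ : ℝ) * h ^ 2 = h := by
      have : (m₀ : ℝ) * h ^ 2 = ((m₀ : ℝ) * h) * h := by ring
      rw [this, hmh, one_mul]
    have hg2p : 0 < g2 (U g1 h (m₀ + 1) a) := hg2pos _ (hUpos a ha (m₀ + 1) (by omega))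
    simp only [hΦdef]
    rw [div_le_div_iff₀ hD hg2p]
    rw [hmh2] at hb
    have hg1p : 0 < g1 (U g1 h (m₀ + 1) a) := hg1pos _ (hUpos a ha (m₀ + 1) (by omega))
    nlinarith
  have hΦlb : ∀ a : ℝ, 0 < a →
      h / 2 * (g1 (U g1 h (m₀ + 1) a) / g2 (U g1 h (m₀ + 1) a)) ≤ Φ a := by
    intro a ha
    have hD := hDenpos a ha
    have hg2p : 0 < g2 (U g1 h (m₀ + 1) a) := hg2pos _ (hUpos a ha (m₀ + 1) (by omega))
    have hg1p : 0 < g1 (U g1 h (m₀ + 1) a) := hg1pos _ (hUpos a ha (m₀ + 1) (by omega))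
    have hP0 : 0 < U g1 h (m₀ + 1) a - U g1 h m₀ a := by
      have := (hUgrow a ha m₀ hm₀).2; linarith
    simp only [hΦdef]
    have heq : h / 2 * (g1 (U g1 h (m₀ + 1) a) / g2 (U g1 h (m₀ + 1) a))
        = (h ^ 2 / 2 * g1 (U g1 h (m₀ + 1) a)) / (h * g2 (U g1 h (m₀ + 1) a)) := by
      field_simp
    rw [heq]
    gcongr
    linarith
  -- determinism of solutions
  have hdet : ∀ u : ℕ → ℝ, IsSolution g1 g2 (m₀ + 1) h α u →
      ∀ k, 1 ≤ k → k ≤ m₀ + 1 → u k = U g1 h k (u 1) := by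
    intro u hu k
    induction k using Nat.strong_induction_on with
    | _ k ih =>
      intro hk1 hkn
      rcases lt_or_ge k 3 with hk3 | hk3
      · interval_cases k
        · rw [U_one]
        · rw [U_two]
          have := hu.2.1
          linarith
      · obtain ⟨j, rfl⟩ : ∃ j, k = j + 3 := ⟨k - 3, by omega⟩
        have hrec := hu.2.2.1 (j + 2) (by omega) (by omega)
        have e2 : u (j + 2) = U g1 h (j + 2) (u 1) := ih (j + 2) (by omega) (by omega) (by omega)
        have e1 : u (j + 1) = U g1 h (j + 1) (u 1) := ih (j + 1) (by omega) (by omega) (by omega)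
        rw [show j + 2 + 1 = j + 3 from rfl, show j + 2 - 1 = j + 1 from rfl] at hrec
        rw [U_rec, ← e2, ← e1]
        linarith
  have hsolΦ : ∀ u : ℕ → ℝ, IsSolution g1 g2 (m₀ + 1) h α u → Φ (u 1) = α := by
    intro u hu
    have hu1 : 0 < u 1 := hu.1 1 le_rfl (by omega)
    have hbc := hu.2.2.2
    rw [show m₀ + 1 - 1 = m₀ from rfl] at hbc
    have en : u (m₀ + 1) = U g1 h (m₀ + 1) (u 1) := hdet u hu (m₀ + 1) (by omega) le_rfl
    have em : u m₀ = U g1 h m₀ (u 1) := hdet u hu m₀ (by omega) (by omega)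
    rw [en, em] at hbc
    have hD0 : h * g2 (U g1 h (m₀ + 1) (u 1)) ≠ 0 := (hDenpos (u 1) hu1).ne'
    simp only [hΦdef]
    rw [div_eq_iff hD0]
    linarith
  constructor
  · -- existence
    obtain ⟨x₀, hx₀pos, hx₀⟩ := hsurj (2 * α / h + 1) (by positivity)
    obtain ⟨x₁, hx₁pos, hx₁⟩ := hsurj α hα
    -- small starting point
    have hcont : ContinuousAt (U g1 h (m₀ + 1)) 0 :=
      (hasDerivAt_U_s11 g1 h hg1d (m₀ + 1) 0).continuousAt
    have h00 : U g1 h (m₀ + 1) 0 = 0 := U_at_zero g1 h hg10 (m₀ + 1)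
    have hev : ∀ᶠ x in nhds (0 : ℝ), U g1 h (m₀ + 1) x < x₀ := by
      have : Filter.Tendsto (U g1 h (m₀ + 1)) (nhds 0) (nhds 0) := by
        simpa [h00] using hcont.tendsto
      exact this.eventually_lt_const hx₀pos
    have hev' : ∀ᶠ x in nhdsWithin (0 : ℝ) (Set.Ioi 0), U g1 h (m₀ + 1) x < x₀ :=
      hev.filter_mono nhdsWithin_le_nhds
    obtain ⟨a, haU, ha0⟩ := (hev'.and self_mem_nhdsWithin).exists
    have ha0' : 0 < a := ha0
    set b := max (x₁ + 1) (a + 1) with hbdef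
    have hab : a < b := lt_of_lt_of_le (by linarith) (le_max_right _ _)
    have hb0 : 0 < b := lt_trans ha0' hab
    -- Φ a > α
    have hua := hUpos a ha0' (m₀ + 1) (by omega)
    have hga : 2 * α / h + 1 < g1 (U g1 h (m₀ + 1) a) / g2 (U g1 h (m₀ + 1) a) := by
      rw [← hx₀]
      exact hdec hua hx₀pos haU
    have hΦa : α < Φ a := by
      have hlb := hΦlb a ha0'
      have hgt : h / 2 * (2 * α / h + 1)
          < h / 2 * (g1 (U g1 h (m₀ + 1) a) / g2 (U g1 h (m₀ + 1) a)) :=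
        mul_lt_mul_of_pos_left hga (by positivity)
      have heq : h / 2 * (2 * α / h + 1) = α + h / 2 := by field_simp
      linarith
    -- Φ b < α
    have hub' := hUpos b hb0 (m₀ + 1) (by omega)
    have hbx₁ : x₁ < U g1 h (m₀ + 1) b := by
      have h1 : b ≤ U g1 h (m₀ + 1) b := (hUgrow b hb0 (m₀ + 1) (by omega)).1
      have h2 : x₁ + 1 ≤ b := le_max_left _ _
      linarith
    have hgb : g1 (U g1 h (m₀ + 1) b) / g2 (U g1 h (m₀ + 1) b) < α := by
      rw [← hx₁]
      exact hdec hx₁pos hub' hbx₁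
    have hΦb : Φ b < α := lt_of_le_of_lt (hΦub b hb0) hgb
    -- IVT
    have hΦcont : ContinuousOn Φ (Set.Icc a b) := by
      intro x hx
      exact (hΦhd x (lt_of_lt_of_le ha0' hx.1)).1.continuousAt.continuousWithinAt
    have hmem : α ∈ Set.Icc (Φ b) (Φ a) := ⟨le_of_lt hΦb, le_of_lt hΦa⟩
    obtain ⟨c, hc, hΦc⟩ := intermediate_value_Icc' (le_of_lt hab) hΦcont hmem
    have hc0 : 0 < c := lt_of_lt_of_le ha0' hc.1
    refine ⟨fun k => U g1 h k c, ?_, ?_, ?_, ?_⟩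
    · intro k hk1 hkn
      exact hUpos c hc0 k hk1
    · show U g1 h 2 c - U g1 h 1 c = h ^ 2 / 2 * g1 (U g1 h 1 c)
      rw [U_one, U_two]; ring
    · intro k hk2 hkn
      obtain ⟨j, rfl⟩ : ∃ j, k = j + 2 := ⟨k - 2, by omega⟩
      show U g1 h (j + 2 + 1) c - 2 * U g1 h (j + 2) c + U g1 h (j + 2 - 1) c
        = h ^ 2 * g1 (U g1 h (j + 2) c)
      rw [show j + 2 + 1 = j + 3 from rfl, show j + 2 - 1 = j + 1 from rfl, U_rec]
      ring
    · show U g1 h (m₀ + 1) c - U g1 h m₀ c + h ^ 2 / 2 * g1 (U g1 h (m₀ + 1) c)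
        = h * α * g2 (U g1 h (m₀ + 1) c)
      have hD0 : h * g2 (U g1 h (m₀ + 1) c) ≠ 0 := (hDenpos c hc0).ne'
      simp only [hΦdef] at hΦc
      rw [div_eq_iff hD0] at hΦc
      linarith
  · -- uniqueness
    intro u v hu hv k hk1 hkn
    have hu1 : 0 < u 1 := hu.1 1 le_rfl (by omega)
    have hv1 : 0 < v 1 := hv.1 1 le_rfl (by omega)
    have h1 : Φ (u 1) = α := hsolΦ u hu
    have h2 : Φ (v 1) = α := hsolΦ v hv
    have huv : u 1 = v 1 := by
      apply hΦanti.injOn hu1 hv1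
      rw [h1, h2]
    rw [hdet u hu k hk1 hkn, hdet v hv k hk1 hkn, huv]
end
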